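/- Let a, b, c ∈ (0,1) satisfy a ≥ 1/2, b ≥ 1/2, c ≥ a, and c ≥ b. Then a·b·(1−c) + (1−a)·(1−b)·c ≤ 1/4, with equality if and only if a = 1/2 and b = 1/2. Consequently, for n = 3 and any regular parameter vector p (taking a = p_{12}, b = p_{23}, c = p_{13}), the spectral gap λ_K = (1/2)·[1 − (a b (1−c) + (1−a)(1−b) c)^{1/2}] satisfies λ_K ≥ 1/4, with equality if and only if p_{12} = p_{23} = 1/2. -/
import Mathlib


/-- for `a, b, c ∈ (0,1)` with `a ≥ 1/2`, `b ≥ 1/2`, `c ≥ a`, `c ≥ b`,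
we have `a·b·(1-c) + (1-a)·(1-b)·c ≤ 1/4`, with equality iff `a = 1/2` and `b = 1/2`.
Consequently, for `n = 3` and regular `p` (with `a = p₁₂`, `b = p₂₃`, `c = p₁₃`),
the spectral gap `λ_K = (1/2)(1 - √(a b (1-c) + (1-a)(1-b) c))` satisfies
`λ_K ≥ 1/4`, with equality iff `p₁₂ = p₂₃ = 1/2`. -/
theorem n_three_gap_minimized (a b c : ℝ)
    (ha : a ∈ Set.Ioo (0 : ℝ) 1) (hb : b ∈ Set.Ioo (0 : ℝ) 1) (hc : c ∈ Set.Ioo (0 : ℝ) 1)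
    (ha2 : 1 / 2 ≤ a) (hb2 : 1 / 2 ≤ b) (hca : a ≤ c) (hcb : b ≤ c) :
    a * b * (1 - c) + (1 - a) * (1 - b) * c ≤ 1 / 4 ∧
    (a * b * (1 - c) + (1 - a) * (1 - b) * c = 1 / 4 ↔ a = 1 / 2 ∧ b = 1 / 2) ∧
    1 / 4 ≤ (1 / 2) * (1 - Real.sqrt (a * b * (1 - c) + (1 - a) * (1 - b) * c)) ∧
    ((1 / 2) * (1 - Real.sqrt (a * b * (1 - c) + (1 - a) * (1 - b) * c)) = 1 / 4 ↔
      a = 1 / 2 ∧ b = 1 / 2) := by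
  obtain ⟨ha0, ha1⟩ := ha
  obtain ⟨hb0, hb1⟩ := hb
  obtain ⟨hc0, hc1⟩ := hc
  have hkey : 0 ≤ (a + b - 1) * (c - a) :=
    mul_nonneg (by linarith) (by linarith)
  have hle : a * b * (1 - c) + (1 - a) * (1 - b) * c ≤ 1 / 4 := by
    nlinarith [sq_nonneg (2 * a - 1)]
  have hiff : a * b * (1 - c) + (1 - a) * (1 - b) * c = 1 / 4 ↔ a = 1 / 2 ∧ b = 1 / 2 := by
    constructor
    · intro h
      have ha' : a = 1 / 2 := by nlinarith [sq_nonneg (2 * a - 1)]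
      have hb' : b = 1 / 2 := by
        rcases eq_or_lt_of_le hb2 with h' | h'
        · exact h'.symm
        · subst ha'
          nlinarith [mul_pos (by linarith : (0:ℝ) < 2 * b - 1) (by linarith : (0:ℝ) < 2 * c - 1)]
      exact ⟨ha', hb'⟩
    · rintro ⟨rfl, rfl⟩; ring
  have hf0 : 0 ≤ a * b * (1 - c) + (1 - a) * (1 - b) * c := by
    have h1 : 0 ≤ a * b * (1 - c) :=
      mul_nonneg (mul_nonneg ha0.le hb0.le) (by linarith)
    have h2 : 0 ≤ (1 - a) * (1 - b) * c :=
      mul_nonneg (mul_nonneg (by linarith) (by linarith)) hc0.le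
    linarith
  have hs : Real.sqrt (a * b * (1 - c) + (1 - a) * (1 - b) * c) ≤ 1 / 2 := by
    have := Real.sqrt_le_sqrt hle
    rwa [show (1 / 4 : ℝ) = (1 / 2) ^ 2 by norm_num, Real.sqrt_sq (by norm_num)] at this
  refine ⟨hle, hiff, by linarith, ?_⟩
  constructor
  · intro h
    have hs' : Real.sqrt (a * b * (1 - c) + (1 - a) * (1 - b) * c) = 1 / 2 := by linarith
    have := Real.sq_sqrt hf0
    rw [hs'] at this
    exact hiff.mp (by nlinarith)
  · rintro ⟨rfl, rfl⟩
    have : (1 / 2 * (1 / 2) * (1 - c) + (1 - 1 / 2) * (1 - 1 / 2) * c : ℝ) = 1 / 4 := by ring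
    rw [this, show (1 / 4 : ℝ) = (1 / 2) ^ 2 by norm_num, Real.sqrt_sq (by norm_num)]
    norm_num
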